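/- Let f : [−2,2] → [−2,2] be the piecewise linear map whose graph passes through the points (−2,2), (−3/2,−2), (−1,0), (−1/2,−2), (1/2,2), (1,0), (3/2,2), (2,−2). Then the set H = {0} ∪ {±4^{−n} : n ≥ 0} is closed, invariant (f(H) = H) and internally chain transitive, but H is not the ω-limit set of any point: there is no x ∈ [−2,2] with ω(x,f) = H. -/

import Mathlib

noncomputable def exMap (x : ℝ) : ℝ :=
  if x ≤ -(3 / 2) then -8 * x - 14
  else if x ≤ -1 then 4 * x + 4
  else if x ≤ -(1 / 2) then -4 * x - 4
  else if x ≤ 1 / 2 then 4 * x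
  else if x ≤ 1 then -4 * x + 4
  else if x ≤ 3 / 2 then 4 * x - 4
  else -8 * x + 14

def exSet : Set ℝ :=
  {0} ∪ {x | ∃ n : ℕ, x = (1 / 4 : ℝ) ^ n ∨ x = -((1 / 4 : ℝ) ^ n)}

def InternallyChainTransitive {X : Type*} [MetricSpace X] (f : X → X) (Λ : Set X) : Prop :=
  ∀ x ∈ Λ, ∀ y ∈ Λ, ∀ ε : ℝ, 0 < ε → ∃ m : ℕ, 1 ≤ m ∧ ∃ σ : ℕ → X,
    σ 0 = x ∧ σ m = y ∧ (∀ i ≤ m, σ i ∈ Λ) ∧ ∀ i < m, dist (f (σ i)) (σ (i + 1)) < ε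

noncomputable def omegaLimitSet {X : Type*} [MetricSpace X] (f : X → X) (x : X) : Set X :=
  ⋂ k : ℕ, closure ((fun n => f^[n] x) '' Set.Ici k)

/-! ### Auxiliary lemmas -/

lemma pow_quarter_pos (n : ℕ) : (0:ℝ) < (1/4:ℝ)^n := pow_pos (by norm_num) n

lemma pow_quarter_le_one (n : ℕ) : (1/4:ℝ)^n ≤ 1 :=
  pow_le_one₀ (by norm_num) (by norm_num)

lemma exMap_mid {x : ℝ} (h1 : -(1/2) < x) (h2 : x ≤ 1/2) : exMap x = 4 * x := by
  unfold exMap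
  rw [if_neg (by linarith), if_neg (by linarith), if_neg (by linarith), if_pos h2]

lemma exMap_right {x : ℝ} (h1 : 1/2 < x) (h2 : x ≤ 1) : exMap x = -4 * x + 4 := by
  unfold exMap
  rw [if_neg (by linarith), if_neg (by linarith), if_neg (by linarith),
    if_neg (by linarith), if_pos h2]

lemma exMap_right2 {x : ℝ} (h1 : 1 < x) (h2 : x ≤ 3/2) : exMap x = 4 * x - 4 := by
  unfold exMap
  rw [if_neg (by linarith), if_neg (by linarith), if_neg (by linarith),
    if_neg (by linarith), if_neg (by linarith), if_pos h2]

lemma exMap_negone' {x : ℝ} (h1 : -(3/2) < x) (h2 : x ≤ -1) : exMap x = 4 * x + 4 := by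
  unfold exMap
  rw [if_neg (by linarith), if_pos h2]

lemma exMap_zero : exMap 0 = 0 := by
  rw [exMap_mid (by norm_num) (by norm_num)]; ring

lemma exMap_one : exMap 1 = 0 := by
  rw [exMap_right (by norm_num) (by norm_num)]; ring

lemma exMap_negone : exMap (-1) = 0 := by
  rw [exMap_negone' (by norm_num) (by norm_num)]; ring

lemma exMap_pow (k : ℕ) : exMap ((1/4:ℝ)^(k+1)) = (1/4:ℝ)^k := by
  have h1 : (1/4:ℝ)^(k+1) ≤ 1/2 := by
    calc (1/4:ℝ)^(k+1) = (1/4:ℝ)^k * (1/4) := by rw [pow_succ]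
    _ ≤ 1 * (1/4) := by
        apply mul_le_mul_of_nonneg_right (pow_quarter_le_one k) (by norm_num)
    _ ≤ 1/2 := by norm_num
  rw [exMap_mid (by linarith [pow_quarter_pos (k+1)]) h1, pow_succ]; ring

lemma exMap_negpow (k : ℕ) : exMap (-((1/4:ℝ)^(k+1))) = -((1/4:ℝ)^k) := by
  have h1 : (1/4:ℝ)^(k+1) ≤ 1/2 := by
    calc (1/4:ℝ)^(k+1) = (1/4:ℝ)^k * (1/4) := by rw [pow_succ]
    _ ≤ 1 * (1/4) := by
        apply mul_le_mul_of_nonneg_right (pow_quarter_le_one k) (by norm_num)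
    _ ≤ 1/2 := by norm_num
  have h2 : (1/4:ℝ)^(k+1) ≤ 1/4 := by
    calc (1/4:ℝ)^(k+1) = (1/4:ℝ)^k * (1/4) := by rw [pow_succ]
    _ ≤ 1 * (1/4) := by
        apply mul_le_mul_of_nonneg_right (pow_quarter_le_one k) (by norm_num)
    _ = 1/4 := by norm_num
  rw [exMap_mid (by linarith) (by linarith [pow_quarter_pos (k+1)]), pow_succ]; ring

lemma zero_mem_exSet : (0:ℝ) ∈ exSet := Or.inl rfl

lemma pow_mem_exSet (n : ℕ) : ((1/4:ℝ)^n) ∈ exSet := Or.inr ⟨n, Or.inl rfl⟩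

lemma negpow_mem_exSet (n : ℕ) : (-((1/4:ℝ)^n)) ∈ exSet := Or.inr ⟨n, Or.inr rfl⟩

/-! ### Closedness -/

noncomputable def exSeq (n : ℕ) : ℝ :=
  if n % 2 = 0 then (1/4:ℝ)^(n/2) else -((1/4:ℝ)^(n/2))

lemma exSeq_tendsto : Filter.Tendsto exSeq Filter.atTop (nhds 0) := by
  rw [Metric.tendsto_atTop]
  intro ε hε
  obtain ⟨N, hN⟩ := exists_pow_lt_of_lt_one hε (show (1/4:ℝ) < 1 by norm_num)
  refine ⟨2 * N, fun n hn => ?_⟩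
  have hN2 : N ≤ n / 2 := by omega
  have habs : |exSeq n| = (1/4:ℝ)^(n/2) := by
    unfold exSeq
    split_ifs
    · exact abs_of_pos (pow_quarter_pos _)
    · rw [abs_neg]; exact abs_of_pos (pow_quarter_pos _)
  rw [Real.dist_eq, sub_zero, habs]
  calc (1/4:ℝ)^(n/2) ≤ (1/4:ℝ)^N :=
        pow_le_pow_of_le_one (by norm_num) (by norm_num) hN2
  _ < ε := hN

lemma exSet_eq_range : exSet = insert 0 (Set.range exSeq) := by
  ext x
  constructor
  · rintro (h | ⟨n, h | h⟩)
    · exact Or.inl h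
    · refine Or.inr ⟨2 * n, ?_⟩
      unfold exSeq
      rw [if_pos (by omega)]
      rw [h]; congr 1; omega
    · refine Or.inr ⟨2 * n + 1, ?_⟩
      unfold exSeq
      rw [if_neg (by omega)]
      rw [h]; congr 2; omega
  · rintro (h | ⟨n, rfl⟩)
    · exact Or.inl h
    · unfold exSeq
      split_ifs
      · exact pow_mem_exSet _
      · exact negpow_mem_exSet _

lemma exSet_isClosed : IsClosed exSet := by
  rw [exSet_eq_range]
  exact exSeq_tendsto.isCompact_insert_range.isClosed

/-! ### Invariance -/

lemma exMap_image : exMap '' exSet = exSet := by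
  ext y
  constructor
  · rintro ⟨z, (hz | ⟨n, hz | hz⟩), rfl⟩
    · rw [hz, exMap_zero]; exact zero_mem_exSet
    · cases n with
      | zero => rw [hz]; simpa [exMap_one] using zero_mem_exSet
      | succ k => rw [hz, exMap_pow]; exact pow_mem_exSet k
    · cases n with
      | zero => rw [hz]; simpa [exMap_negone] using zero_mem_exSet
      | succ k => rw [hz, exMap_negpow]; exact negpow_mem_exSet k
  · rintro (h | ⟨n, h | h⟩)
    · exact ⟨0, zero_mem_exSet, by rw [exMap_zero]; exact h.symm⟩
    · exact ⟨(1/4:ℝ)^(n+1), pow_mem_exSet _, by rw [exMap_pow]; exact h.symm⟩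
    · exact ⟨-((1/4:ℝ)^(n+1)), negpow_mem_exSet _, by rw [exMap_negpow]; exact h.symm⟩

/-! ### Chain transitivity -/

def ExChain (ε a b : ℝ) : Prop :=
  ∃ m : ℕ, 1 ≤ m ∧ ∃ σ : ℕ → ℝ,
    σ 0 = a ∧ σ m = b ∧ (∀ i ≤ m, σ i ∈ exSet) ∧ ∀ i < m, dist (exMap (σ i)) (σ (i + 1)) < ε

lemma exChain_trans {ε a b c : ℝ} (h1 : ExChain ε a c) (h2 : ExChain ε c b) :
    ExChain ε a b := by
  obtain ⟨m1, hm1, σ1, hs0, hs1, hmem1, hd1⟩ := h1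
  obtain ⟨m2, hm2, σ2, ht0, ht1, hmem2, hd2⟩ := h2
  refine ⟨m1 + m2, by omega, fun i => if i ≤ m1 then σ1 i else σ2 (i - m1), ?_, ?_, ?_, ?_⟩
  · simp [hs0]
  · beta_reduce
    rw [if_neg (by omega)]
    have : m1 + m2 - m1 = m2 := by omega
    rw [this, ht1]
  · intro i hi
    by_cases h : i ≤ m1
    · beta_reduce
      rw [if_pos h]; exact hmem1 i h
    · beta_reduce
      rw [if_neg h]; exact hmem2 _ (by omega)
  · intro i hi
    by_cases h : i < m1
    · beta_reduce
      rw [if_pos (by omega), if_pos (by omega)]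
      exact hd1 i h
    · by_cases h' : i = m1
      · subst h'
        beta_reduce
        rw [if_pos le_rfl, if_neg (by omega)]
        have e1 : i + 1 - i = 1 := by omega
        rw [e1, hs1, ← ht0]
        exact hd2 0 (by omega)
      · beta_reduce
        rw [if_neg (by omega), if_neg (by omega)]
        have e1 : i + 1 - m1 = (i - m1) + 1 := by omega
        rw [e1]
        exact hd2 _ (by omega)

lemma exChain_to_zero {a : ℝ} (ha : a ∈ exSet) {ε : ℝ} (hε : 0 < ε) : ExChain ε a 0 := by
  have hconst : ExChain ε 0 0 := by
    refine ⟨1, le_rfl, fun _ => 0, rfl, rfl, fun _ _ => zero_mem_exSet, fun i _ => ?_⟩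
    rw [exMap_zero]; simpa using hε
  rcases ha with h | ⟨n, h | h⟩
  · rw [h]; exact hconst
  · subst h
    refine ⟨n + 1, by omega, fun i => if i ≤ n then (1/4:ℝ)^(n - i) else 0, ?_, ?_, ?_, ?_⟩
    · simp
    · beta_reduce
      rw [if_neg (by omega)]
    · intro i hi
      by_cases h : i ≤ n
      · beta_reduce
        rw [if_pos h]; exact pow_mem_exSet _
      · beta_reduce
        rw [if_neg h]; exact zero_mem_exSet
    · intro i hi
      by_cases h : i < n
      · beta_reduce
        rw [if_pos (by omega), if_pos (by omega)]
        have e1 : n - i = (n - (i+1)) + 1 := by omega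
        rw [e1, exMap_pow]
        simpa using hε
      · have h' : i = n := by omega
        beta_reduce
        rw [if_pos (by omega), if_neg (by omega), h', Nat.sub_self, pow_zero, exMap_one]
        simpa using hε
  · subst h
    refine ⟨n + 1, by omega, fun i => if i ≤ n then -((1/4:ℝ)^(n - i)) else 0, ?_, ?_, ?_, ?_⟩
    · simp
    · beta_reduce
      rw [if_neg (by omega)]
    · intro i hi
      by_cases h : i ≤ n
      · beta_reduce
        rw [if_pos h]; exact negpow_mem_exSet _
      · beta_reduce
        rw [if_neg h]; exact zero_mem_exSet
    · intro i hi
      by_cases h : i < n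
      · beta_reduce
        rw [if_pos (by omega), if_pos (by omega)]
        have e1 : n - i = (n - (i+1)) + 1 := by omega
        rw [e1, exMap_negpow]
        simpa using hε
      · have h' : i = n := by omega
        beta_reduce
        rw [if_pos (by omega), if_neg (by omega), h', Nat.sub_self, pow_zero, exMap_negone]
        simpa using hε

lemma exChain_from_zero {b : ℝ} (hb : b ∈ exSet) {ε : ℝ} (hε : 0 < ε) : ExChain ε 0 b := by
  have hconst : ExChain ε 0 0 := by
    refine ⟨1, le_rfl, fun _ => 0, rfl, rfl, fun _ _ => zero_mem_exSet, fun i _ => ?_⟩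
    rw [exMap_zero]; simpa using hε
  obtain ⟨N0, hN0⟩ := exists_pow_lt_of_lt_one hε (show (1/4:ℝ) < 1 by norm_num)
  rcases hb with h | ⟨m, h | h⟩
  · rw [h]; exact hconst
  · subst h
    set N := max m N0 with hN
    have hmN : m ≤ N := le_max_left _ _
    have hNsmall : (1/4:ℝ)^N < ε :=
      lt_of_le_of_lt (pow_le_pow_of_le_one (by norm_num) (by norm_num) (le_max_right _ _)) hN0
    refine ⟨1 + (N - m), by omega,
      fun i => if i = 0 then 0 else (1/4:ℝ)^(N - (i - 1)), ?_, ?_, ?_, ?_⟩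
    · simp
    · beta_reduce
      rw [if_neg (by omega)]
      congr 1
      omega
    · intro i hi
      by_cases h : i = 0
      · beta_reduce
        rw [if_pos h]; exact zero_mem_exSet
      · beta_reduce
        rw [if_neg h]; exact pow_mem_exSet _
    · intro i hi
      by_cases h : i = 0
      · subst h
        beta_reduce
        rw [if_pos rfl, if_neg (by omega), exMap_zero]
        have : (1:ℕ) - 1 = 0 := rfl
        rw [this, Nat.sub_zero, Real.dist_eq]
        rw [abs_sub_comm, sub_zero, abs_of_pos (pow_quarter_pos _)]
        exact hNsmall
      · beta_reduce
        rw [if_neg h, if_neg (by omega)]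
        have e1 : N - (i - 1) = (N - i) + 1 := by omega
        rw [e1, exMap_pow]
        have e2 : i + 1 - 1 = i := by omega
        rw [e2]
        simpa using hε
  · subst h
    set N := max m N0 with hN
    have hmN : m ≤ N := le_max_left _ _
    have hNsmall : (1/4:ℝ)^N < ε :=
      lt_of_le_of_lt (pow_le_pow_of_le_one (by norm_num) (by norm_num) (le_max_right _ _)) hN0
    refine ⟨1 + (N - m), by omega,
      fun i => if i = 0 then 0 else -((1/4:ℝ)^(N - (i - 1))), ?_, ?_, ?_, ?_⟩
    · simp
    · beta_reduce
      rw [if_neg (by omega)]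
      congr 2
      omega
    · intro i hi
      by_cases h : i = 0
      · beta_reduce
        rw [if_pos h]; exact zero_mem_exSet
      · beta_reduce
        rw [if_neg h]; exact negpow_mem_exSet _
    · intro i hi
      by_cases h : i = 0
      · subst h
        beta_reduce
        rw [if_pos rfl, if_neg (by omega), exMap_zero]
        have : (1:ℕ) - 1 = 0 := rfl
        rw [this, Nat.sub_zero, Real.dist_eq, sub_neg_eq_add, zero_add,
          abs_of_pos (pow_quarter_pos _)]
        exact hNsmall
      · beta_reduce
        rw [if_neg h, if_neg (by omega)]
        have e1 : N - (i - 1) = (N - i) + 1 := by omega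
        rw [e1, exMap_negpow]
        have e2 : i + 1 - 1 = i := by omega
        rw [e2]
        simpa using hε

lemma exSet_ict : InternallyChainTransitive exMap exSet := by
  intro x hx y hy ε hε
  exact exChain_trans (exChain_to_zero hx hε) (exChain_from_zero hy hε)

/-! ### Not an omega limit set -/

lemma exMap_mapsTo {x : ℝ} (hx : x ∈ Set.Icc (-2:ℝ) 2) : exMap x ∈ Set.Icc (-2:ℝ) 2 := by
  obtain ⟨h1, h2⟩ := hx
  unfold exMap
  split_ifs <;> constructor <;> linarith

lemma exMap_iter_mem {x : ℝ} (hx : x ∈ Set.Icc (-2:ℝ) 2) (n : ℕ) :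
    exMap^[n] x ∈ Set.Icc (-2:ℝ) 2 := by
  induction n with
  | zero => exact hx
  | succ k ih => rw [Function.iterate_succ_apply']; exact exMap_mapsTo ih

lemma exSet_quarter {h : ℝ} (hmem : h ∈ exSet) (h1 : (114:ℝ)/1000 < h) (h2 : h < (51:ℝ)/100) :
    h = 1/4 := by
  rcases hmem with h0 | ⟨n, hp | hp⟩
  · rw [Set.mem_singleton_iff] at h0; subst h0; linarith
  · subst hp
    match n with
    | 0 => norm_num at h2
    | 1 => norm_num
    | (k+2) =>
      exfalso
      have : (1/4:ℝ)^(k+2) ≤ (1/4:ℝ)^2 :=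
        pow_le_pow_of_le_one (by norm_num) (by norm_num) (by omega)
      norm_num at this
      linarith
  · subst hp
    have := pow_quarter_pos n
    linarith

/-- Eventually the orbit is within `ε` of `exSet`. -/
lemma eventually_near (x : ℝ) (hx : x ∈ Set.Icc (-2:ℝ) 2)
    (hω : omegaLimitSet exMap x = exSet) {ε : ℝ} (hε : 0 < ε) :
    ∃ N : ℕ, ∀ n ≥ N, ∃ h ∈ exSet, |exMap^[n] x - h| < ε := by
  by_contra hcon
  push_neg at hcon
  set K : Set ℝ := Set.Icc (-2:ℝ) 2 ∩ ⋂ h ∈ exSet, {z : ℝ | ε ≤ |z - h|} with hK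
  have hKclosed : IsClosed K := by
    apply IsClosed.inter isClosed_Icc
    apply isClosed_biInter
    intro h _
    exact isClosed_le continuous_const ((continuous_id.sub continuous_const).abs)
  have hKsub : K ⊆ Set.Icc (-2:ℝ) 2 := Set.inter_subset_left
  set V : ℕ → Set ℝ := fun k => closure ((fun n => exMap^[n] x) '' Set.Ici k) ∩ K with hV
  have hVclosed : ∀ k, IsClosed (V k) := fun k => (isClosed_closure).inter hKclosed
  have hVnonempty : ∀ k, (V k).Nonempty := by
    intro k
    obtain ⟨n, hn, hfar⟩ := hcon k
    refine ⟨exMap^[n] x, subset_closure ⟨n, hn, rfl⟩, exMap_iter_mem hx n, ?_⟩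
    simp only [Set.mem_iInter]
    intro h hh
    simp only [Set.mem_setOf_eq]
    have := hfar h hh
    linarith [this]
  have hVmono : ∀ k, V (k+1) ⊆ V k := by
    intro k
    apply Set.inter_subset_inter_left
    apply closure_mono
    apply Set.image_mono
    exact Set.Ici_subset_Ici.2 (by omega)
  have hVsub : V 0 ⊆ Set.Icc (-2:ℝ) 2 := fun z hz => hKsub hz.2
  have hVcompact : IsCompact (V 0) :=
    isCompact_Icc.of_isClosed_subset (hVclosed 0) hVsub
  obtain ⟨y, hy⟩ := IsCompact.nonempty_iInter_of_sequence_nonempty_isCompact_isClosed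
    V hVmono hVnonempty hVcompact hVclosed
  have hyω : y ∈ omegaLimitSet exMap x := by
    simp only [Set.mem_iInter] at hy
    exact Set.mem_iInter.2 fun k => (hy k).1
  have hyK : y ∈ K := (Set.mem_iInter.1 hy 0).2
  rw [hω] at hyω
  have : ε ≤ |y - y| := by
    have := hyK.2
    simp only [Set.mem_iInter] at this
    exact this y hyω
  simp at this
  linarith

lemma visits (x : ℝ) (hω : omegaLimitSet exMap x = exSet) {h : ℝ} (hh : h ∈ exSet)
    (N : ℕ) {ε : ℝ} (hε : 0 < ε) : ∃ n ≥ N, |exMap^[n] x - h| < ε := by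
  have : h ∈ omegaLimitSet exMap x := hω.symm ▸ hh
  have hcl : h ∈ closure ((fun n => exMap^[n] x) '' Set.Ici N) := Set.mem_iInter.1 this N
  obtain ⟨b, hb, hdist⟩ := Metric.mem_closure_iff.1 hcl ε hε
  obtain ⟨n, hn, rfl⟩ := hb
  refine ⟨n, hn, ?_⟩
  rw [Real.dist_eq] at hdist
  rw [abs_sub_comm]
  exact hdist

lemma not_omega (x : ℝ) (hx : x ∈ Set.Icc (-2:ℝ) 2) :
    omegaLimitSet exMap x ≠ exSet := by
  intro hω
  obtain ⟨N, hnear⟩ := eventually_near x hx hω (show (0:ℝ) < 1/100 by norm_num)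
  obtain ⟨n₀, hn₀, hclose⟩ := visits x hω (pow_mem_exSet 0) N (show (0:ℝ) < 1/100 by norm_num)
  rw [pow_zero] at hclose
  -- trap: all later orbit points are in [0,1/2] ∪ (1-1/25, 1+1/25)
  have trap : ∀ m : ℕ, (0 ≤ exMap^[n₀+m] x ∧ exMap^[n₀+m] x ≤ 1/2) ∨
      |exMap^[n₀+m] x - 1| < 1/25 := by
    intro m
    induction m with
    | zero => right; simpa using (by linarith [abs_lt.1 hclose] : |exMap^[n₀] x - 1| < 1/25)
    | succ k ih =>
      set z := exMap^[n₀+k] x with hz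
      have hstep : exMap^[n₀+(k+1)] x = exMap z := by
        rw [show n₀ + (k+1) = (n₀ + k) + 1 by omega, Function.iterate_succ_apply']
      rcases ih with ⟨hz0, hz12⟩ | hz1
      · by_cases hsmall : z ≤ 1/8
        · left
          rw [hstep, exMap_mid (by linarith) (by linarith)]
          constructor <;> linarith
        · right
          obtain ⟨h, hh, hnearz⟩ := hnear (n₀ + k) (by omega)
          rw [← hz] at hnearz
          have habs := abs_lt.1 hnearz
          have hq : h = 1/4 := exSet_quarter hh (by linarith) (by linarith)
          subst hq
          rw [hstep, exMap_mid (by linarith) (by linarith)]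
          rw [abs_lt]
          constructor <;> linarith
      · have habs := abs_lt.1 hz1
        by_cases hle : z ≤ 1
        · left
          rw [hstep, exMap_right (by linarith) hle]
          constructor <;> linarith
        · left
          rw [hstep, exMap_right2 (by linarith) (by linarith)]
          constructor <;> linarith
  -- but -1 ∈ exSet must be visited
  obtain ⟨n, hn, hvisit⟩ := visits x hω (negpow_mem_exSet 0) n₀ (show (0:ℝ) < 1/2 by norm_num)
  rw [pow_zero] at hvisit
  have hn' : n = n₀ + (n - n₀) := by omega
  have := trap (n - n₀)
  rw [← hn'] at this
  have habs := abs_lt.1 hvisit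
  rcases this with ⟨h0, _⟩ | h1
  · have : exMap^[n] x - -1 ≥ 1 := by linarith
    linarith
  · have habs2 := abs_lt.1 h1
    linarith

theorem exSet_ict_not_omegaLimitSet :
    IsClosed exSet ∧ exMap '' exSet = exSet ∧
    InternallyChainTransitive exMap exSet ∧
    ¬ ∃ x ∈ Set.Icc (-2 : ℝ) 2, omegaLimitSet exMap x = exSet := by
  refine ⟨exSet_isClosed, exMap_image, exSet_ict, ?_⟩
  rintro ⟨x, hx, hω⟩
  exact not_omega x hx hω
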